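/- Let x_n, y_n, x, y ∈ Λ with Q_{x_n} → Q_x and Q_{y_n} → Q_y in the strong operator topology, and suppose for each n the projections Q_{x_n} and Q_{y_n} commute. Then Q_x and Q_y commute and Q_{x_n ∧ y_n} → Q_{x ∧ y} strongly. -/

import Mathlib

open MeasureTheory Filter Topology
open scoped RealInnerProductSpace

set_option synthInstance.maxHeartbeats 400000
noncomputable section

variable {Ω : Type*}

/-- The trivial σ-field augmented with all null sets: the least element `0` of `Λ`. -/
def nullSF {m0 : MeasurableSpace Ω} (μ : Measure Ω) : MeasurableSpace Ω :=
  MeasurableSpace.generateFrom {s : Set Ω | μ s = 0}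

/-- Membership in `Λ`: a sub-σ-field of `m0` containing all null sets. -/
def InLam {m0 : MeasurableSpace Ω} (μ : Measure Ω) (m : MeasurableSpace Ω) : Prop :=
  m ≤ m0 ∧ nullSF μ ≤ m

set_option synthInstance.maxHeartbeats 400000 in
/-- The type `L₂` subspace `L₂(m)` of `H = L₂(Ω, F, P)`. -/
abbrev L2S {m0 : MeasurableSpace Ω} (μ : Measure Ω) (m : MeasurableSpace Ω) :
    Submodule ℝ (Lp ℝ 2 μ) :=
  @lpMeas Ω ℝ ℝ _ _ _ m m0 2 μ

/-- The orthogonal projection of `H = L₂(Ω, F, P)` onto `L₂(m)`. -/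
def Q {m0 : MeasurableSpace Ω} (μ : Measure Ω) (m : MeasurableSpace Ω) :
    Lp ℝ 2 μ →L[ℝ] Lp ℝ 2 μ :=
  letI := Classical.dec (m ≤ m0)
  if hm : m ≤ m0 then
    haveI : Fact (m ≤ m0) := ⟨hm⟩
    (L2S μ m).subtypeL.comp (Submodule.orthogonalProjectionOnto (L2S μ m))
  else 0

/-- Strong operator convergence of the projections `Q (x n)` to `Q l`. -/
def SOTLim {m0 : MeasurableSpace Ω} (μ : Measure Ω) (x : ℕ → MeasurableSpace Ω)
    (l : MeasurableSpace Ω) : Prop :=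
  ∀ f : Lp ℝ 2 μ, Tendsto (fun n => Q μ (x n) f) atTop (𝓝 (Q μ l f))

section Aux
variable {m0 : MeasurableSpace Ω} {μ : Measure Ω}

lemma Q_eq {m : MeasurableSpace Ω} (hm : m ≤ m0) (f : Lp ℝ 2 μ) :
    haveI : Fact (m ≤ m0) := ⟨hm⟩
    Q μ m f = (Submodule.orthogonalProjectionOnto (L2S μ m) f : Lp ℝ 2 μ) := by
  haveI : Fact (m ≤ m0) := ⟨hm⟩
  simp only [Q, dif_pos hm]
  rfl

lemma Q_mem {m : MeasurableSpace Ω} (hm : m ≤ m0) (f : Lp ℝ 2 μ) :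
    Q μ m f ∈ L2S μ m := by
  haveI : Fact (m ≤ m0) := ⟨hm⟩
  rw [Q_eq hm]
  exact (Submodule.orthogonalProjectionOnto (L2S μ m) f).2

lemma Q_of_mem {m : MeasurableSpace Ω} (hm : m ≤ m0) {f : Lp ℝ 2 μ}
    (hf : f ∈ L2S μ m) : Q μ m f = f := by
  haveI : Fact (m ≤ m0) := ⟨hm⟩
  rw [Q_eq hm]
  exact Submodule.starProjection_eq_self_iff.mpr hf

lemma Q_norm_le {m : MeasurableSpace Ω} (hm : m ≤ m0) (f : Lp ℝ 2 μ) :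
    ‖Q μ m f‖ ≤ ‖f‖ := by
  haveI : Fact (m ≤ m0) := ⟨hm⟩
  rw [Q_eq hm]
  exact (Submodule.orthogonalProjectionOnto (L2S μ m)).le_opNorm f |>.trans
    (by nlinarith [Submodule.orthogonalProjectionOnto_norm_le (L2S μ m), norm_nonneg f])

lemma Q_inner {m : MeasurableSpace Ω} (hm : m ≤ m0) (u v : Lp ℝ 2 μ) :
    ⟪Q μ m u, v⟫ = ⟪u, Q μ m v⟫ := by
  haveI : Fact (m ≤ m0) := ⟨hm⟩
  rw [Q_eq hm, Q_eq hm]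
  exact Submodule.inner_starProjection_left_eq_right _ u v

end Aux

section Aux2
variable {m0 : MeasurableSpace Ω} {μ : Measure Ω}

lemma L2S_mono {m1 m2 : MeasurableSpace Ω} (h : m1 ≤ m2) {f : Lp ℝ 2 μ}
    (hf : f ∈ L2S μ m1) : f ∈ L2S μ m2 := by
  rw [mem_lpMeas_iff_aestronglyMeasurable] at *
  exact hf.mono h

lemma mem_L2S_inf {m1 m2 : MeasurableSpace Ω} (h1 : InLam μ m1) (h2 : InLam μ m2)
    {f : Lp ℝ 2 μ} (hf1 : f ∈ L2S μ m1) (hf2 : f ∈ L2S μ m2) : f ∈ L2S μ (m1 ⊓ m2) := by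
  rw [mem_lpMeas_iff_aestronglyMeasurable] at *
  obtain ⟨g1, hg1, he1⟩ := hf1
  obtain ⟨g2, hg2, he2⟩ := hf2
  have hg12 : g1 =ᵐ[μ] g2 := he1.symm.trans he2
  set N := {ω | g1 ω ≠ g2 ω} with hNdef
  have hN : μ N = 0 := by
    rw [Filter.EventuallyEq, ae_iff] at hg12
    exact hg12
  have hNm1 : MeasurableSet[m1] N := h1.2 _ (MeasurableSpace.measurableSet_generateFrom hN)
  have hNm2 : MeasurableSet[m2] N := h2.2 _ (MeasurableSpace.measurableSet_generateFrom hN)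
  set h : Ω → ℝ := N.piecewise (0 : Ω → ℝ) g1 with hdef
  have hm1 : Measurable[m1] h := Measurable.piecewise hNm1 measurable_const hg1.measurable
  have hm2 : Measurable[m2] h := by
    have : h = N.piecewise (0 : Ω → ℝ) g2 := by
      funext ω
      by_cases hω : ω ∈ N
      · rw [hdef, Set.piecewise_eq_of_mem _ _ _ hω, Set.piecewise_eq_of_mem _ _ _ hω]
      · have hgg : g1 ω = g2 ω := not_not.mp hω
        rw [hdef, Set.piecewise_eq_of_notMem _ _ _ hω, Set.piecewise_eq_of_notMem _ _ _ hω, hgg]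
    rw [this]
    exact Measurable.piecewise hNm2 measurable_const hg2.measurable
  refine ⟨h, ?_, ?_⟩
  · exact Measurable.stronglyMeasurable (fun s hs => MeasurableSpace.measurableSet_inf.mpr ⟨hm1 hs, hm2 hs⟩)
  · refine he1.trans ?_
    have hsub : {ω | g1 ω ≠ h ω} ⊆ N := by
      intro ω hω
      by_contra hωN
      exact hω (by rw [hdef, Set.piecewise_eq_of_notMem _ _ _ hωN])
    rw [Filter.EventuallyEq, ae_iff]
    exact measure_mono_null hsub hN

lemma Q_comp_eq_inf {m1 m2 : MeasurableSpace Ω} (h1 : InLam μ m1) (h2 : InLam μ m2)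
    (hc : (Q μ m1).comp (Q μ m2) = (Q μ m2).comp (Q μ m1)) (f : Lp ℝ 2 μ) :
    Q μ m1 (Q μ m2 f) = Q μ (m1 ⊓ m2) f := by
  have h12 : m1 ⊓ m2 ≤ m0 := le_trans inf_le_left h1.1
  haveI : Fact (m1 ⊓ m2 ≤ m0) := ⟨h12⟩
  rw [Q_eq h12]
  symm
  apply Submodule.eq_starProjection_of_mem_of_inner_eq_zero
  · refine mem_L2S_inf h1 h2 (Q_mem h1.1 _) ?_
    have : Q μ m1 (Q μ m2 f) = Q μ m2 (Q μ m1 f) := by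
      have := DFunLike.congr_fun hc f
      simpa using this
    rw [this]
    exact Q_mem h2.1 _
  · intro w hw
    have hw1 : w ∈ L2S μ m1 := L2S_mono inf_le_left hw
    have hw2 : w ∈ L2S μ m2 := L2S_mono inf_le_right hw
    rw [inner_sub_left, Q_inner h1.1, Q_of_mem h1.1 hw1, Q_inner h2.1, Q_of_mem h2.1 hw2,
      sub_self]

lemma SOT_prod {x y : ℕ → MeasurableSpace Ω} {xl yl : MeasurableSpace Ω}
    (hx : ∀ n, InLam μ (x n))
    (hlx : SOTLim μ x xl) (hly : SOTLim μ y yl) (f : Lp ℝ 2 μ) :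
    Tendsto (fun n => Q μ (x n) (Q μ (y n) f)) atTop (𝓝 (Q μ xl (Q μ yl f))) := by
  rw [tendsto_iff_norm_sub_tendsto_zero]
  have hb : ∀ n, ‖Q μ (x n) (Q μ (y n) f) - Q μ xl (Q μ yl f)‖ ≤
      ‖Q μ (y n) f - Q μ yl f‖ + ‖Q μ (x n) (Q μ yl f) - Q μ xl (Q μ yl f)‖ := by
    intro n
    have heq : Q μ (x n) (Q μ (y n) f) - Q μ xl (Q μ yl f)
        = Q μ (x n) (Q μ (y n) f - Q μ yl f) + (Q μ (x n) (Q μ yl f) - Q μ xl (Q μ yl f)) := by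
      rw [map_sub]; abel
    rw [heq]
    exact (norm_add_le _ _).trans (add_le_add_left (Q_norm_le (hx n).1 _) _)
  have h1 : Tendsto (fun n => ‖Q μ (y n) f - Q μ yl f‖ +
      ‖Q μ (x n) (Q μ yl f) - Q μ xl (Q μ yl f)‖) atTop (𝓝 0) := by
    have := (tendsto_iff_norm_sub_tendsto_zero.mp (hly f)).add
      (tendsto_iff_norm_sub_tendsto_zero.mp (hlx (Q μ yl f)))
    simpa using this
  exact squeeze_zero (fun n => norm_nonneg _) hb h1

end Aux2

/-- If `Q_{x_n} → Q_x` and `Q_{y_n} → Q_y` strongly and for each `n` the projections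
`Q_{x_n}, Q_{y_n}` commute, then `Q_x, Q_y` commute and `Q_{x_n ∧ y_n} → Q_{x ∧ y}`
strongly. -/
theorem stmt10 {m0 : MeasurableSpace Ω} (μ : Measure Ω) [IsProbabilityMeasure μ]
    (x y : ℕ → MeasurableSpace Ω) (xl yl : MeasurableSpace Ω)
    (hx : ∀ n, InLam μ (x n)) (hy : ∀ n, InLam μ (y n))
    (hxl : InLam μ xl) (hyl : InLam μ yl)
    (hcomm : ∀ n, (Q μ (x n)).comp (Q μ (y n)) = (Q μ (y n)).comp (Q μ (x n)))
    (hlx : SOTLim μ x xl) (hly : SOTLim μ y yl) :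
    (Q μ xl).comp (Q μ yl) = (Q μ yl).comp (Q μ xl) ∧
    SOTLim μ (fun n => x n ⊓ y n) (xl ⊓ yl) := by
  have hcl : (Q μ xl).comp (Q μ yl) = (Q μ yl).comp (Q μ xl) := by
    refine ContinuousLinearMap.ext fun f => ?_
    simp only [ContinuousLinearMap.comp_apply]
    have t1 := SOT_prod hx hlx hly f
    have t2 := SOT_prod hy hly hlx f
    have heq : (fun n => Q μ (x n) (Q μ (y n) f)) = fun n => Q μ (y n) (Q μ (x n) f) := by
      funext n
      have := DFunLike.congr_fun (hcomm n) f
      simpa using this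
    rw [heq] at t1
    exact tendsto_nhds_unique t1 t2
  refine ⟨hcl, fun f => ?_⟩
  have heq : (fun n => Q μ (x n ⊓ y n) f) = fun n => Q μ (x n) (Q μ (y n) f) := by
    funext n
    exact (Q_comp_eq_inf (hx n) (hy n) (hcomm n) f).symm
  have h2 := Q_comp_eq_inf hxl hyl hcl f
  rw [heq, ← h2]
  exact SOT_prod hx hlx hly f
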